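/- Let (X,τ,d) be a pre-e.m.t. space such that (X,τ) is Hausdorff. Then (X,τ,d) is an extended metric-topological space if and only if the following two conditions hold: (a) for every τ-closed set C ⊆ X and every point x̄ ∈ X∖C there exists f ∈ LIP_{b,1}(X,τ,d) with f = 0 on C and f(x̄) > 0; (b) if in addition C is τ-compact, then for every real λ with 0 < λ ≤ d(x̄,C) (where d(x̄,C) := inf{d(x̄,y) : y ∈ C}) the function f in (a) can be chosen so that f(x̄) = λ. -/

import Mathlib

open scoped ENNReal

universe u v w

/-- An extended pseudodistance on `X`. -/
structure IsExtPseudoDist {X : Type*} (d : X → X → ℝ≥0∞) : Prop where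
  refl : ∀ x, d x x = 0
  symm : ∀ x y, d x y = d y x
  triangle : ∀ x y z, d x y ≤ d x z + d z y

/-- An extended distance on `X`. -/
structure IsExtDist {X : Type*} (d : X → X → ℝ≥0∞) : Prop where
  eq_zero_iff : ∀ x y, d x y = 0 ↔ x = y
  symm : ∀ x y, d x y = d y x
  triangle : ∀ x y z, d x y ≤ d x z + d z y

/-- `LIP_{b,1}(X,τ,d)`: bounded `τ`-continuous functions `f : X → ℝ` with
`|f x - f y| ≤ d x y`. -/
def Lip1 {X : Type*} (τ : TopologicalSpace X) (d : X → X → ℝ≥0∞) : Set (X → ℝ) :=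
  {f | @Continuous X ℝ τ _ f ∧ (∃ C : ℝ, ∀ x, |f x| ≤ C) ∧
    ∀ x y, ENNReal.ofReal |f x - f y| ≤ d x y}

/-- `(X,τ,d)` is an extended metric-topological space. -/
def IsEMT {X : Type*} (τ : TopologicalSpace X) (d : X → X → ℝ≥0∞) : Prop :=
  IsExtDist d ∧
  τ = (⨅ f ∈ Lip1 τ d, TopologicalSpace.induced f inferInstance) ∧
  (∀ x y, d x y = ⨆ f ∈ Lip1 τ d, ENNReal.ofReal |f x - f y|)

/-- A continuous-short map between (pre-)extended (pseudo)metric-topological spaces. -/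
def ContinuousShort {X Y : Type*} (τX : TopologicalSpace X) (dX : X → X → ℝ≥0∞)
    (τY : TopologicalSpace Y) (dY : Y → Y → ℝ≥0∞) (φ : X → Y) : Prop :=
  @Continuous X Y τX τY φ ∧ ∀ x y, dY (φ x) (φ y) ≤ dX x y

namespace EMTAux

variable {X : Type u} {τ : TopologicalSpace X} {d : X → X → ℝ≥0∞}

lemma lip1_const (c : ℝ) : (fun _ : X => c) ∈ Lip1 τ d := by
  refine ⟨continuous_const, ⟨|c|, fun x => le_rfl⟩, fun x y => ?_⟩
  simp

lemma lip1_dominated {f : X → ℝ} (hf : f ∈ Lip1 τ d) {g : X → ℝ}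
    (hc : @Continuous X ℝ τ _ g) (C : ℝ) (hb : ∀ x, |g x| ≤ C)
    (hl : ∀ x y, |g x - g y| ≤ |f x - f y|) : g ∈ Lip1 τ d :=
  ⟨hc, ⟨C, hb⟩, fun x y => le_trans (ENNReal.ofReal_le_ofReal (hl x y)) (hf.2.2 x y)⟩

/-- Building block: `x ↦ max 0 (a - |f x - c|)`. -/
lemma lip1_bump {f : X → ℝ} (hf : f ∈ Lip1 τ d) (a c : ℝ) :
    (fun x => max 0 (a - |f x - c|)) ∈ Lip1 τ d := by
  refine lip1_dominated hf ?_ |a| (fun x => ?_) (fun x y => ?_)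
  · exact continuous_const.max (continuous_const.sub ((hf.1.sub continuous_const).abs))
  · rw [abs_of_nonneg (le_max_left _ _)]
    refine max_le (abs_nonneg a) (le_trans (sub_le_self a (abs_nonneg _)) (le_abs_self a))
  · calc |max 0 (a - |f x - c|) - max 0 (a - |f y - c|)|
        ≤ max |(0 : ℝ) - 0| |(a - |f x - c|) - (a - |f y - c|)| :=
          abs_max_sub_max_le_max _ _ _ _
      _ = abs (|f y - c| - |f x - c|) := by
          rw [sub_zero, abs_zero, max_eq_right (abs_nonneg _)]
          congr 1; ring
      _ ≤ |(f y - c) - (f x - c)| := abs_abs_sub_abs_le_abs_sub _ _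
      _ = |f x - f y| := by rw [abs_sub_comm]; congr 1; ring

/-- Building block: `x ↦ max 0 (f x - ε)`. -/
lemma lip1_pospart_sub {f : X → ℝ} (hf : f ∈ Lip1 τ d) (ε : ℝ) :
    (fun x => max 0 (f x - ε)) ∈ Lip1 τ d := by
  obtain ⟨C, hC⟩ := hf.2.1
  refine lip1_dominated hf ?_ (|C| + |ε|) (fun x => ?_) (fun x y => ?_)
  · exact continuous_const.max (hf.1.sub continuous_const)
  · rw [abs_of_nonneg (le_max_left _ _)]
    refine max_le (by positivity) ?_
    have h1 : f x ≤ |f x| := le_abs_self _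
    have h2 : |f x| ≤ C := hC x
    have h3 : C ≤ |C| := le_abs_self _
    have h4 : -ε ≤ |ε| := neg_le_abs ε
    linarith
  · calc |max 0 (f x - ε) - max 0 (f y - ε)|
        ≤ max |(0 : ℝ) - 0| |(f x - ε) - (f y - ε)| := abs_max_sub_max_le_max _ _ _ _
      _ = |f x - f y| := by
          rw [sub_zero, abs_zero, max_eq_right (abs_nonneg _)]
          congr 1; ring

lemma lip1_add_const {f : X → ℝ} (hf : f ∈ Lip1 τ d) (c : ℝ) :
    (fun x => f x + c) ∈ Lip1 τ d := by
  obtain ⟨C, hC⟩ := hf.2.1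
  refine lip1_dominated hf (hf.1.add continuous_const) (C + |c|) (fun x => ?_) (fun x y => ?_)
  · exact le_trans (abs_add_le _ _) (add_le_add (hC x) le_rfl)
  · apply le_of_eq; congr 1; ring

lemma lip1_max {f g : X → ℝ} (hf : f ∈ Lip1 τ d) (hg : g ∈ Lip1 τ d) :
    (fun x => max (f x) (g x)) ∈ Lip1 τ d := by
  obtain ⟨Cf, hCf⟩ := hf.2.1
  obtain ⟨Cg, hCg⟩ := hg.2.1
  refine ⟨hf.1.max hg.1, ⟨max Cf Cg, fun x => ?_⟩, fun x y => ?_⟩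
  · exact le_trans abs_max_le_max_abs_abs (max_le_max (hCf x) (hCg x))
  · refine le_trans (ENNReal.ofReal_le_ofReal (abs_max_sub_max_le_max _ _ _ _)) ?_
    rcases max_cases |f x - f y| |g x - g y| with ⟨h, _⟩ | ⟨h, _⟩ <;> rw [h]
    · exact hf.2.2 x y
    · exact hg.2.2 x y

lemma lip1_min {f g : X → ℝ} (hf : f ∈ Lip1 τ d) (hg : g ∈ Lip1 τ d) :
    (fun x => min (f x) (g x)) ∈ Lip1 τ d := by
  obtain ⟨Cf, hCf⟩ := hf.2.1
  obtain ⟨Cg, hCg⟩ := hg.2.1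
  refine ⟨hf.1.min hg.1, ⟨max Cf Cg, fun x => ?_⟩, fun x y => ?_⟩
  · exact le_trans abs_min_le_max_abs_abs (max_le_max (hCf x) (hCg x))
  · refine le_trans (ENNReal.ofReal_le_ofReal (abs_min_sub_min_le_max _ _ _ _)) ?_
    rcases max_cases |f x - f y| |g x - g y| with ⟨h, _⟩ | ⟨h, _⟩ <;> rw [h]
    · exact hf.2.2 x y
    · exact hg.2.2 x y

lemma lip1_inf' {ι : Type v} (t : Finset ι) (ht : t.Nonempty) (p : ι → X → ℝ)
    (hp : ∀ i ∈ t, p i ∈ Lip1 τ d) :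
    (fun x => t.inf' ht (fun i => p i x)) ∈ Lip1 τ d := by
  classical
  letI := τ
  have hbd : ∀ i ∈ t, ∃ C : ℝ, ∀ x, |p i x| ≤ C := fun i hi => (hp i hi).2.1
  choose! C hC using hbd
  have keylip : ∀ x y : X,
      ENNReal.ofReal |t.inf' ht (fun i => p i x) - t.inf' ht (fun i => p i y)| ≤ d x y := by
    intro x y
    rcases le_total (t.inf' ht fun i => p i x) (t.inf' ht fun i => p i y) with hxy | hxy
    · obtain ⟨i, hi, hix⟩ := t.exists_mem_eq_inf' ht (fun i => p i x)
      have h2 : t.inf' ht (fun i => p i y) ≤ p i y := Finset.inf'_le _ hi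
      have h3 : |t.inf' ht (fun i => p i x) - t.inf' ht (fun i => p i y)|
          ≤ |p i x - p i y| := by
        rw [abs_of_nonpos (by linarith), neg_sub, abs_sub_comm]
        refine le_trans ?_ (le_abs_self _)
        rw [hix] at hxy ⊢
        linarith
      exact le_trans (ENNReal.ofReal_le_ofReal h3) ((hp i hi).2.2 x y)
    · obtain ⟨i, hi, hiy⟩ := t.exists_mem_eq_inf' ht (fun i => p i y)
      have h2 : t.inf' ht (fun i => p i x) ≤ p i x := Finset.inf'_le _ hi
      have h3 : |t.inf' ht (fun i => p i x) - t.inf' ht (fun i => p i y)|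
          ≤ |p i x - p i y| := by
        rw [abs_of_nonneg (by linarith)]
        refine le_trans ?_ (le_abs_self _)
        rw [hiy] at hxy ⊢
        linarith
      exact le_trans (ENNReal.ofReal_le_ofReal h3) ((hp i hi).2.2 x y)
  refine ⟨Continuous.finset_inf'_apply ht fun i hi => (hp i hi).1,
    ⟨t.sup' ht (fun i => |C i|), fun x => ?_⟩, keylip⟩
  show |t.inf' ht (fun i => p i x)| ≤ t.sup' ht (fun i => |C i|)
  rw [abs_le]
  constructor
  · refine Finset.le_inf' ht _ fun k hk => ?_
    have h1 : -C k ≤ p k x := (abs_le.1 (hC k hk x)).1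
    have h2 : |C k| ≤ t.sup' ht fun i => |C i| := Finset.le_sup' (fun i => |C i|) hk
    have h3 : C k ≤ |C k| := le_abs_self _
    linarith
  · obtain ⟨i, hi, hix⟩ := t.exists_mem_eq_inf' ht (fun i => p i x)
    rw [hix]
    have h1 := (abs_le.1 (hC i hi x)).2
    have h2 : |C i| ≤ t.sup' ht fun j => |C j| := Finset.le_sup' (fun j => |C j|) hi
    have h3 : C i ≤ |C i| := le_abs_self _
    linarith

/-- The approximation step: from the recovery property and compactness, produce a `Lip1`
function vanishing on `C` with value exactly `lam - ε` at `x₀`. -/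
lemma approx (hrec : ∀ x y, d x y = ⨆ f ∈ Lip1 τ d, ENNReal.ofReal |f x - f y|)
    {C : Set X} (hC : @IsCompact X τ C) (x₀ : X) {lam ε : ℝ}
    (hlam : 0 < lam) (hε : 0 < ε) (hεlam : ε < lam)
    (hinf : ENNReal.ofReal lam ≤ ⨅ y ∈ C, d x₀ y) :
    ∃ g ∈ Lip1 τ d, (∀ y ∈ C, g y = 0) ∧ g x₀ = lam - ε ∧ ∀ x, 0 ≤ g x ∧ g x ≤ lam := by
  classical
  letI := τ
  rcases Set.eq_empty_or_nonempty C with hCe | hCne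
  · refine ⟨fun _ => lam - ε, lip1_const _, ?_, rfl, fun x =>
      ⟨by show (0:ℝ) ≤ lam - ε; linarith, by show lam - ε ≤ lam; linarith⟩⟩
    intro y hy; rw [hCe] at hy; exact absurd hy (Set.notMem_empty y)
  · have key : ∀ y : X, ∃ f : X → ℝ, y ∈ C →
        f ∈ Lip1 τ d ∧ lam - ε < |f x₀ - f y| := by
      intro y
      by_cases hy : y ∈ C
      · have h1 : ENNReal.ofReal lam ≤ d x₀ y :=
          le_trans hinf (iInf₂_le y hy)
        have h2 : ENNReal.ofReal (lam - ε) < d x₀ y :=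
          lt_of_lt_of_le ((ENNReal.ofReal_lt_ofReal_iff hlam).2 (by linarith)) h1
        rw [hrec, lt_iSup_iff] at h2
        obtain ⟨f, hf⟩ := h2
        rw [lt_iSup_iff] at hf
        obtain ⟨hfmem, hflt⟩ := hf
        refine ⟨f, fun _ => ⟨hfmem, ?_⟩⟩
        exact (ENNReal.ofReal_lt_ofReal_iff_of_nonneg (by linarith)).1 hflt
      · exact ⟨0, fun h => absurd h hy⟩
    choose F hF using key
    set p : X → X → ℝ := fun y x => max 0 (lam - |F y x - F y x₀|) with hp
    have hpmem : ∀ y ∈ C, p y ∈ Lip1 τ d := fun y hy => lip1_bump (hF y hy).1 lam (F y x₀)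
    have hpx₀ : ∀ y, p y x₀ = lam := by
      intro y
      show max 0 (lam - |F y x₀ - F y x₀|) = lam
      rw [sub_self, abs_zero, sub_zero]
      exact max_eq_right hlam.le
    have hpy : ∀ y ∈ C, p y y < ε := by
      intro y hy
      have h0 := (hF y hy).2
      have h1 : lam - |F y y - F y x₀| < ε := by
        rw [abs_sub_comm] at h0; linarith
      exact max_lt hε h1
    have hple : ∀ y x, p y x ≤ lam := by
      intro y x
      refine max_le hlam.le ?_
      have := abs_nonneg (F y x - F y x₀); linarith
    obtain ⟨t, htC, htcov⟩ := hC.elim_nhds_subcover (fun y => (p y) ⁻¹' Set.Iio ε)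
      (fun y hy => by
        refine IsOpen.mem_nhds ?_ (hpy y hy)
        exact (hpmem y hy).1.isOpen_preimage _ isOpen_Iio)
    have htne : t.Nonempty := by
      obtain ⟨z, hz⟩ := hCne
      have hmem := htcov hz
      simp only [Set.mem_iUnion, exists_prop] at hmem
      obtain ⟨y, hyt, _⟩ := hmem
      exact ⟨y, hyt⟩
    have hqmem : (fun x => t.inf' htne (fun y => p y x)) ∈ Lip1 τ d :=
      lip1_inf' t htne p (fun y hy => hpmem y (htC y hy))
    refine ⟨fun x => max 0 (t.inf' htne (fun y => p y x) - ε),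
      lip1_pospart_sub hqmem ε, ?_, ?_, ?_⟩
    · intro y hy
      have hmem := htcov hy
      simp only [Set.mem_iUnion, exists_prop] at hmem
      obtain ⟨y', hy't, hyU⟩ := hmem
      have h3 : t.inf' htne (fun z => p z y) ≤ p y' y := Finset.inf'_le _ hy't
      have h4 : p y' y < ε := hyU
      show max 0 (t.inf' htne (fun z => p z y) - ε) = 0
      exact max_eq_left (by linarith)
    · show max 0 (t.inf' htne (fun y => p y x₀) - ε) = lam - ε
      have hq0 : t.inf' htne (fun y => p y x₀) = lam := by
        rw [show (fun y => p y x₀) = fun _ : X => lam from funext fun y => hpx₀ y]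
        exact Finset.inf'_const _ _
      rw [hq0]
      exact max_eq_right (by linarith)
    · intro x
      refine ⟨le_max_left _ _, ?_⟩
      show max 0 (t.inf' htne (fun y => p y x) - ε) ≤ lam
      have h1 : t.inf' htne (fun y => p y x) ≤ lam := by
        obtain ⟨y, hyt⟩ := htne
        exact Finset.inf'_le_of_le _ hyt (hple y x)
      exact max_le hlam.le (by linarith)

/-- Exact value at `x₀`, from the recovery property and compactness. -/
lemma exact_value (hrec : ∀ x y, d x y = ⨆ f ∈ Lip1 τ d, ENNReal.ofReal |f x - f y|)
    {C : Set X} (hC : @IsCompact X τ C) (x₀ : X) {lam : ℝ} (hlam : 0 < lam)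
    (hinf : ENNReal.ofReal lam ≤ ⨅ y ∈ C, d x₀ y) :
    ∃ f ∈ Lip1 τ d, (∀ y ∈ C, f y = 0) ∧ f x₀ = lam := by
  classical
  letI := τ
  set cap : ℕ → ℝ := fun n => lam / 2 ^ n with hcap
  have cap_pos : ∀ n, 0 < cap n := fun n => by positivity
  have cap_succ : ∀ n, cap (n + 1) = cap n / 2 := by
    intro n
    show lam / 2 ^ (n + 1) = lam / 2 ^ n / 2
    rw [pow_succ]; ring
  have cap_mono : ∀ n, cap (n + 1) ≤ cap n := fun n => by
    rw [cap_succ]; linarith [cap_pos n]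
  have cap_tendsto : Filter.Tendsto cap Filter.atTop (nhds 0) := by
    have h2 : Filter.Tendsto (fun n : ℕ => ((2 : ℝ)⁻¹) ^ n) Filter.atTop (nhds 0) :=
      tendsto_pow_atTop_nhds_zero_of_lt_one (by norm_num) (by norm_num)
    have h3 := h2.const_mul lam
    simp only [mul_zero] at h3
    convert h3 using 2 with n
    show lam / 2 ^ n = lam * (2 : ℝ)⁻¹ ^ n
    rw [inv_pow, div_eq_mul_inv]
  have happrox : ∀ n : ℕ, ∃ g ∈ Lip1 τ d, (∀ y ∈ C, g y = 0) ∧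
      g x₀ = lam - cap (n + 2) ∧ ∀ x, 0 ≤ g x ∧ g x ≤ lam := by
    intro n
    refine approx hrec hC x₀ hlam (cap_pos (n + 2)) ?_ hinf
    have hrec2 : ∀ m : ℕ, cap (m + 1) ≤ cap 1 := by
      intro m
      induction m with
      | zero => exact le_rfl
      | succ m ih => exact le_trans (cap_mono (m + 1)) ih
    have h1 : cap (n + 2) ≤ cap 1 := hrec2 (n + 1)
    have h2 : cap 1 < lam := by
      rw [cap_succ 0]
      have h3 : cap 0 = lam := by show lam / 2 ^ 0 = lam; simp
      rw [h3]; linarith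
    linarith
  choose g hg1 hg2 hg3 hg4 using happrox
  let h : ℕ → X → ℝ := fun n => Nat.rec (g 0)
    (fun m hm => fun x => max (hm x) (min (g (m + 1) x) (hm x + cap (m + 1)))) n
  have h_succ : ∀ n x, h (n + 1) x
      = max (h n x) (min (g (n + 1) x) (h n x + cap (n + 1))) := fun n x => rfl
  have inv : ∀ n, h n ∈ Lip1 τ d ∧ (∀ y ∈ C, h n y = 0) ∧
      (∀ x, 0 ≤ h n x ∧ h n x ≤ lam) ∧ lam - cap (n + 1) ≤ h n x₀ := by
    intro n
    induction n with
    | zero =>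
      refine ⟨hg1 0, hg2 0, hg4 0, ?_⟩
      have he : h 0 x₀ = g 0 x₀ := rfl
      rw [he, hg3 0]
      have h1 : cap 2 ≤ cap 1 := cap_mono 1
      show lam - cap 1 ≤ lam - cap 2
      linarith
    | succ n ih =>
      obtain ⟨ihl, ihz, ihb, ihv⟩ := ih
      refine ⟨?_, ?_, ?_, ?_⟩
      · exact lip1_max ihl (lip1_min (hg1 (n + 1)) (lip1_add_const ihl (cap (n + 1))))
      · intro y hy
        rw [h_succ n y, ihz y hy, hg2 (n + 1) y hy, zero_add,
          min_eq_left (cap_pos (n + 1)).le, max_self]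
      · intro x
        rw [h_succ n x]
        refine ⟨le_trans (ihb x).1 (le_max_left _ _), ?_⟩
        exact max_le (ihb x).2 (le_trans (min_le_left _ _) (hg4 (n + 1) x).2)
      · rw [h_succ n x₀]
        have hgv : g (n + 1) x₀ = lam - cap (n + 3) := hg3 (n + 1)
        have hcm : cap (n + 3) ≤ cap (n + 2) := cap_mono (n + 2)
        have hcp := cap_pos (n + 2)
        show lam - cap (n + 2) ≤ max (h n x₀) (min (g (n + 1) x₀) (h n x₀ + cap (n + 1)))
        refine le_trans ?_ (le_max_right _ _)
        refine le_min (by rw [hgv]; linarith) (by linarith)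
  have hmono_succ : ∀ n x, h n x ≤ h (n + 1) x := by
    intro n x; rw [h_succ n x]; exact le_max_left _ _
  have hcap_succ : ∀ n x, h (n + 1) x ≤ h n x + cap (n + 1) := by
    intro n x; rw [h_succ n x]
    exact max_le (le_add_of_nonneg_right (cap_pos (n + 1)).le) (min_le_right _ _)
  have hmono : ∀ x, Monotone fun n => h n x :=
    fun x => monotone_nat_of_le_succ fun n => hmono_succ n x
  have hchain : ∀ n m, n ≤ m → ∀ x, h m x ≤ h n x + (cap n - cap m) := by
    intro n m hnm
    induction m, hnm using Nat.le_induction with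
    | base => intro x; simp
    | succ m hnm ih =>
      intro x
      have h1 := hcap_succ m x
      have h2 := ih x
      have h3 := cap_succ m
      linarith
  have hbdd : ∀ x, BddAbove (Set.range fun n => h n x) := by
    intro x
    refine ⟨lam, ?_⟩
    rintro _ ⟨n, rfl⟩
    exact ((inv n).2.2.1 x).2
  have hle : ∀ n x, h n x ≤ ⨆ m, h m x := fun n x => le_ciSup (hbdd x) n
  have hub : ∀ n x, (⨆ m, h m x) ≤ h n x + cap n := by
    intro n x
    refine ciSup_le fun m => ?_
    rcases le_total n m with hnm | hmn
    · have h1 := hchain n m hnm x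
      have h2 := cap_pos m
      linarith
    · have h1 := hmono x hmn
      have h2 := cap_pos n
      linarith
  have htendsto : ∀ x, Filter.Tendsto (fun n => h n x) Filter.atTop (nhds (⨆ m, h m x)) :=
    fun x => tendsto_atTop_ciSup (hmono x) (hbdd x)
  have hfnn : ∀ x, 0 ≤ ⨆ m, h m x := fun x => le_trans ((inv 0).2.2.1 x).1 (hle 0 x)
  have hfle : ∀ x, (⨆ m, h m x) ≤ lam := fun x => ciSup_le fun n => ((inv n).2.2.1 x).2
  refine ⟨fun x => ⨆ m, h m x, ⟨?_, ⟨lam, fun x => ?_⟩, ?_⟩, ?_, ?_⟩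
  · -- continuity via uniform convergence
    have htu : TendstoUniformly (fun n x => h n x) (fun x => ⨆ m, h m x) Filter.atTop := by
      rw [Metric.tendstoUniformly_iff]
      intro ε hε
      filter_upwards [cap_tendsto.eventually (gt_mem_nhds hε)] with n hn x
      rw [Real.dist_eq]
      have h1 := hle n x
      have h2 := hub n x
      rw [abs_of_nonneg (by linarith)]
      linarith
    exact htu.continuous (Filter.Eventually.of_forall fun n => (inv n).1.1).frequently
  · show |⨆ m, h m x| ≤ lam
    rw [abs_le]
    exact ⟨by linarith [hfnn x, hlam], hfle x⟩
  · -- Lipschitz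
    intro x y
    by_cases hdxy : d x y = ⊤
    · rw [hdxy]; exact le_top
    · have hb : ∀ n, |h n x - h n y| ≤ (d x y).toReal := fun n =>
        (ENNReal.ofReal_le_iff_le_toReal hdxy).1 ((inv n).1.2.2 x y)
      have habs : Filter.Tendsto (fun n => |h n x - h n y|) Filter.atTop
          (nhds |(⨆ m, h m x) - ⨆ m, h m y|) := ((htendsto x).sub (htendsto y)).abs
      have hlim := le_of_tendsto habs (Filter.Eventually.of_forall hb)
      exact ENNReal.ofReal_le_of_le_toReal hlim
  · intro y hy
    have hz : ∀ n, h n y = 0 := fun n => (inv n).2.1 y hy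
    show (⨆ m, h m y) = 0
    simp only [hz, ciSup_const]
  · -- value lam at x₀
    show (⨆ m, h m x₀) = lam
    refine le_antisymm (hfle x₀) ?_
    have htv : Filter.Tendsto (fun n => lam - cap (n + 1)) Filter.atTop (nhds lam) := by
      have h1 : Filter.Tendsto (fun n : ℕ => cap (n + 1)) Filter.atTop (nhds 0) :=
        cap_tendsto.comp (Filter.tendsto_add_atTop_nat 1)
      have h2 := Filter.Tendsto.sub (tendsto_const_nhds (x := lam)) h1
      simpa using h2
    refine le_of_tendsto htv (Filter.Eventually.of_forall fun n => ?_)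
    exact le_trans (inv n).2.2.2 (hle n x₀)

end EMTAux

set_option maxHeartbeats 2000000 in
/-- Let `(X,τ,d)` be a pre-e.m.t. space with `(X,τ)` Hausdorff. Then `(X,τ,d)` is an e.m.t.
space if and only if: (a) for every `τ`-closed set `C` and every `x̄ ∉ C` there is
`f ∈ LIP_{b,1}(X,τ,d)` with `f = 0` on `C` and `f x̄ > 0`; and (b) if moreover `C` is
`τ`-compact, then for every real `λ` with `0 < λ` and `λ ≤ d(x̄,C)` the function `f` can be
chosen with `f x̄ = λ`. -/
theorem isEMT_iff_separation {X : Type u} (τ : TopologicalSpace X) (d : X → X → ℝ≥0∞)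
    (hd : IsExtDist d) (hT2 : @T2Space X τ) :
    IsEMT τ d ↔
      ((∀ C : Set X, @IsClosed X τ C → ∀ x₀ ∉ C,
          ∃ f ∈ Lip1 τ d, (∀ y ∈ C, f y = 0) ∧ 0 < f x₀) ∧
       (∀ C : Set X, @IsClosed X τ C → @IsCompact X τ C → ∀ x₀ ∉ C, ∀ lam : ℝ,
          0 < lam → ENNReal.ofReal lam ≤ (⨅ y ∈ C, d x₀ y) →
          ∃ f ∈ Lip1 τ d, (∀ y ∈ C, f y = 0) ∧ f x₀ = lam)) := by
  classical
  letI := τ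
  haveI := hT2
  constructor
  · rintro ⟨-, hτ, hrec⟩
    constructor
    · -- (a)
      intro C hC x₀ hx₀
      have hmem : Cᶜ ∈ @nhds X τ x₀ := hC.isOpen_compl.mem_nhds hx₀
      rw [hτ] at hmem
      simp only [nhds_iInf, nhds_induced] at hmem
      rw [Filter.mem_iInf] at hmem
      obtain ⟨I, Ifin, V, hV, hU⟩ := hmem
      have key : ∀ i : I, ∃ ε : ℝ, 0 < ε ∧
          ((i : X → ℝ) ∈ Lip1 τ d → ∀ x, |(i : X → ℝ) x - (i : X → ℝ) x₀| < ε → x ∈ V i) := by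
        intro i
        by_cases hi : (i : X → ℝ) ∈ Lip1 τ d
        · have hVi := hV i
          rw [iInf_pos hi, Filter.mem_comap] at hVi
          obtain ⟨s, hs, hsub⟩ := hVi
          rw [Metric.mem_nhds_iff] at hs
          obtain ⟨ε, hε, hball⟩ := hs
          refine ⟨ε, hε, fun _ x hx => hsub ?_⟩
          apply hball
          rw [Metric.mem_ball, Real.dist_eq]
          exact hx
        · exact ⟨1, one_pos, fun h => absurd h hi⟩
      choose ε hε1 hε2 using key
      haveI : Fintype I := Ifin.fintype
      set J : Finset I := Finset.univ.filter (fun i => (i : X → ℝ) ∈ Lip1 τ d) with hJ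
      have hJmem : ∀ i : I, (i : X → ℝ) ∈ Lip1 τ d → i ∈ J := by
        intro i hi
        rw [hJ, Finset.mem_filter]
        exact ⟨Finset.mem_univ i, hi⟩
      have hJmem' : ∀ i ∈ J, (i : X → ℝ) ∈ Lip1 τ d := by
        intro i hi
        rw [hJ, Finset.mem_filter] at hi
        exact hi.2
      have claim : ∀ x, (∀ i ∈ J, |(i : X → ℝ) x - (i : X → ℝ) x₀| < ε i) → x ∈ Cᶜ := by
        intro x hx
        rw [hU, Set.mem_iInter]
        intro i
        by_cases hi : (i : X → ℝ) ∈ Lip1 τ d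
        · exact hε2 i hi x (hx i (hJmem i hi))
        · have hVi := hV i
          rw [iInf_neg hi, Filter.mem_top] at hVi
          rw [hVi]
          trivial
      by_cases hJne : J.Nonempty
      · set p : I → X → ℝ :=
          fun i x => max 0 (ε i - |(i : X → ℝ) x - (i : X → ℝ) x₀|) with hp
        have hpmem : ∀ i ∈ J, p i ∈ Lip1 τ d := fun i hi =>
          EMTAux.lip1_bump (hJmem' i hi) (ε i) ((i : X → ℝ) x₀)
        have hpval : ∀ i : I, p i x₀ = ε i := by
          intro i
          show max 0 (ε i - |(i : X → ℝ) x₀ - (i : X → ℝ) x₀|) = ε i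
          rw [sub_self, abs_zero, sub_zero]
          exact max_eq_right (hε1 i).le
        refine ⟨fun x => J.inf' hJne (fun i => p i x),
          EMTAux.lip1_inf' J hJne p hpmem, ?_, ?_⟩
        · intro y hy
          have hyn : ¬ ∀ i ∈ J, |(i : X → ℝ) y - (i : X → ℝ) x₀| < ε i := by
            intro hcon
            exact (claim y hcon) hy
          push_neg at hyn
          obtain ⟨i, hiJ, hige⟩ := hyn
          have h0 : p i y = 0 := max_eq_left (by linarith)
          refine le_antisymm ?_ ?_
          · exact le_trans (Finset.inf'_le _ hiJ) (le_of_eq h0)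
          · exact Finset.le_inf' _ _ fun j _ => le_max_left _ _
        · have hpos : ∀ i ∈ J, (0 : ℝ) < p i x₀ := by
            intro i hi
            rw [hpval i]
            exact hε1 i
          show (0:ℝ) < J.inf' hJne (fun i => p i x₀)
          exact (Finset.lt_inf'_iff hJne).2 hpos
      · refine ⟨fun _ => 1, EMTAux.lip1_const 1, ?_, one_pos⟩
        intro y hy
        exfalso
        exact (claim y (fun i hi => absurd ⟨i, hi⟩ hJne)) hy
    · -- (b)
      intro C _ hCcpt x₀ _ lam hlam hinf
      exact EMTAux.exact_value hrec hCcpt x₀ hlam hinf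
  · rintro ⟨ha, hb⟩
    refine ⟨hd, ?_, ?_⟩
    · -- τ is the initial topology
      refine le_antisymm ?_ ?_
      · exact le_iInf₂ fun f hf => continuous_iff_le_induced.1 hf.1
      · rw [← isOpen_implies_isOpen_iff]
        intro U hU
        rw [@isOpen_iff_forall_mem_open X
          (⨅ f ∈ Lip1 τ d, TopologicalSpace.induced f inferInstance) U]
        intro x hx
        obtain ⟨f, hfL, hf0, hfpos⟩ := ha Uᶜ hU.isClosed_compl x (by simpa using hx)
        refine ⟨f ⁻¹' Set.Ioi 0, ?_, ?_, hfpos⟩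
        · intro z hz
          by_contra hzU
          have h0 := hf0 z hzU
          simp only [Set.mem_preimage, Set.mem_Ioi] at hz
          linarith
        · have hle : (⨅ f ∈ Lip1 τ d, TopologicalSpace.induced f inferInstance) ≤
              TopologicalSpace.induced f inferInstance := iInf₂_le f hfL
          exact isOpen_implies_isOpen_iff.mpr hle _ ⟨Set.Ioi 0, isOpen_Ioi, rfl⟩
    · -- recovery
      intro x y
      refine le_antisymm ?_ (iSup₂_le fun f hf => hf.2.2 x y)
      by_cases hxy : x = y
      · subst hxy
        rw [(hd.eq_zero_iff x x).2 rfl]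
        exact zero_le
      · have hsingle : ∀ lam : ℝ, 0 < lam → ENNReal.ofReal lam ≤ d x y →
            ENNReal.ofReal lam ≤ ⨆ f ∈ Lip1 τ d, ENNReal.ofReal |f x - f y| := by
          intro lam hlam hlamle
          have hinf : ENNReal.ofReal lam ≤ ⨅ z ∈ ({y} : Set X), d x z := by
            simp only [Set.mem_singleton_iff, iInf_iInf_eq_left]
            exact hlamle
          obtain ⟨f, hfL, hf0, hfx⟩ := hb {y} isClosed_singleton isCompact_singleton x
            (by simpa using hxy) lam hlam hinf
          have hfy : f y = 0 := hf0 y rfl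
          refine le_trans ?_ (le_iSup₂ (f := fun f _ => ENNReal.ofReal |f x - f y|) f hfL)
          rw [hfx, hfy, sub_zero]
          exact ENNReal.ofReal_le_ofReal (le_abs_self lam)
        by_cases hdt : d x y = ⊤
        · rw [hdt, top_le_iff]
          by_contra hlt
          set S := ⨆ f ∈ Lip1 τ d, ENNReal.ofReal |f x - f y| with hS
          have hSne : S ≠ ⊤ := hlt
          have h1 : ENNReal.ofReal (S.toReal + 1) ≤ S := by
            refine hsingle _ ?_ ?_
            · positivity
            · rw [hdt]; exact le_top
          rw [ENNReal.ofReal_le_iff_le_toReal hSne] at h1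
          linarith
        · have hdpos : d x y ≠ 0 := fun h => hxy ((hd.eq_zero_iff x y).1 h)
          have htr : 0 < (d x y).toReal := ENNReal.toReal_pos hdpos hdt
          have h2 := hsingle (d x y).toReal htr (by rw [ENNReal.ofReal_toReal hdt])
          rwa [ENNReal.ofReal_toReal hdt] at h2
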